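/- arXiv:1603.05022 — 4 statements merged into one kernel-verified Lean document; each statement's English description precedes it below -/
import Mathlib

section
/- Let f : ℝ → ℝ be twice continuously differentiable on (0,∞) and define ψ : ℝ²∖{0} → ℂ by ψ(x₁,x₂) = f(r)·(x₁+ix₂)/r where r = √(x₁²+x₂²). Then ψ satisfies the steady Gross–Pitaevskii equation Δψ(x) + (1−|ψ(x)|²)ψ(x) = 0 at every point x ≠ 0 if and only if f satisfies the ordinary differential equation f''(r) + f'(r)/r + f(r)(1 − f(r)² − 1/r²) = 0 for every r > 0. -/
/-- The vortex wave function `ψ(x₁,x₂) = f(r)·(x₁+ix₂)/r`, `r = √(x₁²+x₂²)`,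
i.e. `ψ = f(r)e^{iθ}`. -/
noncomputable def vortexPsi (f : ℝ → ℝ) (x₁ x₂ : ℝ) : ℂ :=
  (f (Real.sqrt (x₁ ^ 2 + x₂ ^ 2)) : ℂ) * (x₁ + x₂ * Complex.I) /
    (Real.sqrt (x₁ ^ 2 + x₂ ^ 2) : ℝ)

/-- The two-dimensional Laplacian `Δψ = ∂²ψ/∂x₁² + ∂²ψ/∂x₂²` of `ψ : ℝ → ℝ → ℂ`. -/
noncomputable def laplacian2 (ψ : ℝ → ℝ → ℂ) (x₁ x₂ : ℝ) : ℂ :=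
  deriv (deriv (fun s : ℝ => ψ s x₂)) x₁ + deriv (deriv (fun s : ℝ => ψ x₁ s)) x₂

private lemma sqrt_hasDerivAt' {a c : ℝ} (h : 0 < a ^ 2 + c ^ 2) :
    HasDerivAt (fun s : ℝ => Real.sqrt (s ^ 2 + c ^ 2))
      (a / Real.sqrt (a ^ 2 + c ^ 2)) a := by
  have h1 : HasDerivAt (fun s : ℝ => s ^ 2 + c ^ 2) (2 * a) a := by
    simpa [mul_comm] using (hasDerivAt_pow 2 a).add_const (c ^ 2)
  have h2 := (Real.hasDerivAt_sqrt h.ne').comp a h1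
  have hr : 0 < Real.sqrt (a ^ 2 + c ^ 2) := Real.sqrt_pos.2 h
  refine h2.congr_deriv ?_
  field_simp

/-- First derivative of `s ↦ F(√(s²+c²)) * (s*w+v)`. -/
private lemma psi_d1 {F F' : ℝ → ℝ} (hF : ∀ x, 0 < x → HasDerivAt F (F' x) x)
    (c : ℝ) (w v : ℂ) {s : ℝ} (hs : 0 < s ^ 2 + c ^ 2) :
    HasDerivAt (fun t : ℝ => ((F (Real.sqrt (t ^ 2 + c ^ 2)) : ℝ) : ℂ) * (t * w + v))
      (((F' (Real.sqrt (s ^ 2 + c ^ 2)) * (s / Real.sqrt (s ^ 2 + c ^ 2)) : ℝ) : ℂ)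
          * (s * w + v)
        + ((F (Real.sqrt (s ^ 2 + c ^ 2)) : ℝ) : ℂ) * w) s := by
  have hr : 0 < Real.sqrt (s ^ 2 + c ^ 2) := Real.sqrt_pos.2 hs
  have hg := sqrt_hasDerivAt' hs
  have hFg : HasDerivAt (fun t => F (Real.sqrt (t ^ 2 + c ^ 2)))
      (F' (Real.sqrt (s ^ 2 + c ^ 2)) * (s / Real.sqrt (s ^ 2 + c ^ 2))) s :=
    (hF _ hr).comp s hg
  have hFgC := hFg.ofReal_comp
  have hlin : HasDerivAt (fun t : ℝ => (t : ℂ) * w + v) w s := by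
    simpa using (((hasDerivAt_id s).ofReal_comp).mul_const w).add_const v
  exact hFgC.mul hlin

/-- Second derivative of `s ↦ F(√(s²+c²)) * (s*w+v)`. -/
private lemma psi_d2 {F F' F'' : ℝ → ℝ}
    (hF : ∀ x, 0 < x → HasDerivAt F (F' x) x)
    (hF' : ∀ x, 0 < x → HasDerivAt F' (F'' x) x)
    (c : ℝ) (w v : ℂ) {a : ℝ} (h : 0 < a ^ 2 + c ^ 2) :
    deriv (deriv (fun t : ℝ => ((F (Real.sqrt (t ^ 2 + c ^ 2)) : ℝ) : ℂ) * (t * w + v))) a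
      = ((F'' (Real.sqrt (a ^ 2 + c ^ 2)) * a ^ 2 / (a ^ 2 + c ^ 2)
            + F' (Real.sqrt (a ^ 2 + c ^ 2)) * c ^ 2
              / (Real.sqrt (a ^ 2 + c ^ 2) * (a ^ 2 + c ^ 2)) : ℝ) : ℂ)
          * (a * w + v)
        + ((2 * (F' (Real.sqrt (a ^ 2 + c ^ 2)) * a / Real.sqrt (a ^ 2 + c ^ 2)) : ℝ) : ℂ)
          * w := by
  set r := Real.sqrt (a ^ 2 + c ^ 2) with hrdef
  have hr : 0 < r := Real.sqrt_pos.2 h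
  have hrsq : r ^ 2 = a ^ 2 + c ^ 2 := Real.sq_sqrt h.le
  have hev : ∀ᶠ s in nhds a, 0 < s ^ 2 + c ^ 2 := by
    have hc : ContinuousAt (fun s : ℝ => s ^ 2 + c ^ 2) a := by fun_prop
    exact hc (Ioi_mem_nhds h)
  have hD : deriv (fun t : ℝ => ((F (Real.sqrt (t ^ 2 + c ^ 2)) : ℝ) : ℂ) * (t * w + v))
      =ᶠ[nhds a] fun s =>
        ((F' (Real.sqrt (s ^ 2 + c ^ 2)) * (s / Real.sqrt (s ^ 2 + c ^ 2)) : ℝ) : ℂ)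
            * (s * w + v)
          + ((F (Real.sqrt (s ^ 2 + c ^ 2)) : ℝ) : ℂ) * w := by
    filter_upwards [hev] with s hs
    exact (psi_d1 hF c w v hs).deriv
  rw [hD.deriv_eq]
  have hg := sqrt_hasDerivAt' h
  have hφ : HasDerivAt (fun s : ℝ =>
      F' (Real.sqrt (s ^ 2 + c ^ 2)) * (s / Real.sqrt (s ^ 2 + c ^ 2)))
      ((F'' r * (a / r)) * (a / r)
        + F' r * ((1 * r - a * (a / r)) / r ^ 2)) a := by
    exact ((hF' _ hr).comp a hg).mul ((hasDerivAt_id a).div hg hr.ne')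
  have hFg : HasDerivAt (fun t => F (Real.sqrt (t ^ 2 + c ^ 2))) (F' r * (a / r)) a :=
    (hF _ hr).comp a hg
  have hlin : HasDerivAt (fun t : ℝ => (t : ℂ) * w + v) w a := by
    simpa using (((hasDerivAt_id a).ofReal_comp).mul_const w).add_const v
  have hD2 : HasDerivAt (fun s : ℝ =>
      ((F' (Real.sqrt (s ^ 2 + c ^ 2)) * (s / Real.sqrt (s ^ 2 + c ^ 2)) : ℝ) : ℂ)
          * (s * w + v) + ((F (Real.sqrt (s ^ 2 + c ^ 2)) : ℝ) : ℂ) * w) _ a :=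
    (hφ.ofReal_comp.mul hlin).add (hFg.ofReal_comp.mul_const w)
  rw [hD2.deriv]
  have e1 : (F'' r * (a / r)) * (a / r) + F' r * ((1 * r - a * (a / r)) / r ^ 2)
      = F'' r * a ^ 2 / (a ^ 2 + c ^ 2) + F' r * c ^ 2 / (r * (a ^ 2 + c ^ 2)) := by
    rw [← hrsq]
    field_simp
    linear_combination F' r * hrsq
  rw [e1]
  push_cast
  ring

private lemma pospt {a b : ℝ} (h : (a, b) ≠ ((0 : ℝ), (0 : ℝ))) : 0 < a ^ 2 + b ^ 2 := by
  rcases not_and_or.mp (by simpa [Prod.ext_iff] using h) with h' | h'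
  · have : 0 < a ^ 2 := by positivity
    nlinarith [sq_nonneg b]
  · have : 0 < b ^ 2 := by positivity
    nlinarith [sq_nonneg a]

set_option maxHeartbeats 2000000 in
/-- The key pointwise identity. -/
private lemma key (f : ℝ → ℝ) (hf : ContDiffOn ℝ 2 f (Set.Ioi (0 : ℝ)))
    (a b : ℝ) (h : 0 < a ^ 2 + b ^ 2) :
    laplacian2 (vortexPsi f) a b +
        ((1 - ‖vortexPsi f a b‖ ^ 2 : ℝ) : ℂ) * vortexPsi f a b
      = (((deriv (deriv f) (Real.sqrt (a ^ 2 + b ^ 2))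
            + deriv f (Real.sqrt (a ^ 2 + b ^ 2)) / Real.sqrt (a ^ 2 + b ^ 2)
            + f (Real.sqrt (a ^ 2 + b ^ 2))
              * (1 - f (Real.sqrt (a ^ 2 + b ^ 2)) ^ 2 - 1 / Real.sqrt (a ^ 2 + b ^ 2) ^ 2))
          / Real.sqrt (a ^ 2 + b ^ 2) : ℝ) : ℂ) * (a + b * Complex.I) := by
  have hd1 : ∀ ρ : ℝ, 0 < ρ → HasDerivAt f (deriv f ρ) ρ := fun ρ hρ =>
    ((hf.differentiableOn (by norm_num)).differentiableAt (Ioi_mem_nhds hρ)).hasDerivAt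
  have hf' : ContDiffOn ℝ 1 (deriv f) (Set.Ioi (0 : ℝ)) := by
    have := hf.deriv_of_isOpen isOpen_Ioi (m := 1) (by norm_num)
    exact this
  have hd2 : ∀ ρ : ℝ, 0 < ρ → HasDerivAt (deriv f) (deriv (deriv f) ρ) ρ := fun ρ hρ =>
    ((hf'.differentiableOn (by norm_num)).differentiableAt (Ioi_mem_nhds hρ)).hasDerivAt
  set F : ℝ → ℝ := fun ρ => f ρ / ρ with hFdef
  set F' : ℝ → ℝ := fun ρ => deriv f ρ / ρ - f ρ / ρ ^ 2 with hF'def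
  set F'' : ℝ → ℝ := fun ρ =>
    deriv (deriv f) ρ / ρ - 2 * deriv f ρ / ρ ^ 2 + 2 * f ρ / ρ ^ 3 with hF''def
  have hF : ∀ x, 0 < x → HasDerivAt F (F' x) x := by
    intro x hx
    have := (hd1 x hx).div (hasDerivAt_id x) hx.ne'
    refine this.congr_deriv ?_
    simp only [hF'def, id]
    field_simp
  have hF'h : ∀ x, 0 < x → HasDerivAt F' (F'' x) x := by
    intro x hx
    have h1 : HasDerivAt (fun ρ => deriv f ρ / ρ)
        ((deriv (deriv f) x * x - deriv f x * 1) / x ^ 2) x :=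
      (hd2 x hx).div (hasDerivAt_id x) hx.ne'
    have hsq : HasDerivAt (fun ρ : ℝ => ρ ^ 2) (2 * x) x := by
      simpa [mul_comm] using hasDerivAt_pow 2 x
    have h2 : HasDerivAt (fun ρ => f ρ / ρ ^ 2)
        ((deriv f x * x ^ 2 - f x * (2 * x)) / (x ^ 2) ^ 2) x :=
      (hd1 x hx).div hsq (by positivity)
    have := h1.sub h2
    refine this.congr_deriv ?_
    simp only [hF''def]
    field_simp
    ring
  set r := Real.sqrt (a ^ 2 + b ^ 2) with hrdef
  have hr : 0 < r := Real.sqrt_pos.2 h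
  have hrsq : r ^ 2 = a ^ 2 + b ^ 2 := Real.sq_sqrt h.le
  -- rewrite vortexPsi in the standard form
  have hpsi1 : (fun s : ℝ => vortexPsi f s b)
      = fun s : ℝ => ((F (Real.sqrt (s ^ 2 + b ^ 2)) : ℝ) : ℂ) * (s * 1 + b * Complex.I) := by
    funext s
    simp only [vortexPsi, hFdef]
    push_cast
    ring
  have hpsi2 : (fun t : ℝ => vortexPsi f a t)
      = fun t : ℝ => ((F (Real.sqrt (t ^ 2 + a ^ 2)) : ℝ) : ℂ)
          * (t * Complex.I + (a : ℂ)) := by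
    funext t
    simp only [vortexPsi, hFdef, add_comm (a ^ 2) (t ^ 2)]
    push_cast
    ring
  have hV1 := psi_d2 hF hF'h b 1 ((b : ℂ) * Complex.I) h
  have hV2 := psi_d2 hF hF'h a Complex.I (a : ℂ) (by linarith : 0 < b ^ 2 + a ^ 2)
  have habs : ‖vortexPsi f a b‖ ^ 2 = f r ^ 2 := by
    have : vortexPsi f a b
        = ((f r : ℝ) : ℂ) * ((a : ℂ) + (b : ℂ) * Complex.I) / ((r : ℝ) : ℂ) := rfl
    rw [this, norm_div, norm_mul, Complex.norm_real, Complex.norm_real, Real.norm_eq_abs,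
      Real.norm_eq_abs, Complex.norm_add_mul_I, ← hrdef, abs_of_pos hr]
    rw [div_pow, mul_pow, Real.sq_sqrt h.le, ← hrsq, sq_abs]
    field_simp
  have hpsival : vortexPsi f a b = ((F r : ℝ) : ℂ) * ((a : ℂ) + (b : ℂ) * Complex.I) := by
    simp only [vortexPsi, hFdef]
    push_cast
    ring
  rw [laplacian2, hpsi1, hpsi2, hV1, hV2, habs, hpsival]
  rw [show Real.sqrt (b ^ 2 + a ^ 2) = r by rw [hrdef, add_comm]]
  rw [show Real.sqrt (a ^ 2 + b ^ 2) = r from hrdef.symm]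
  have hb2 : (b : ℝ) ^ 2 = r ^ 2 - a ^ 2 := by linarith
  have hco : (F'' r * a ^ 2 / (a ^ 2 + b ^ 2) + F' r * b ^ 2 / (r * (a ^ 2 + b ^ 2)))
      + (F'' r * b ^ 2 / (a ^ 2 + b ^ 2) + F' r * a ^ 2 / (r * (a ^ 2 + b ^ 2)))
      + 2 * F' r / r + (1 - f r ^ 2) * F r
      = (deriv (deriv f) r + deriv f r / r + f r * (1 - f r ^ 2 - 1 / r ^ 2)) / r := by
    simp only [hFdef, hF'def, hF''def]
    rw [← hrsq, hb2]
    field_simp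
    ring
  rw [← hco]
  push_cast
  ring

/-- The map `ψ(x₁,x₂) = f(r)·(x₁+ix₂)/r` satisfies the steady Gross–Pitaevskii equation
`Δψ + (1−|ψ|²)ψ = 0` at every `x ≠ 0` if and only if `f` satisfies the ODE
`f'' + f'/r + f(1 − f² − 1/r²) = 0` for every `r > 0`. -/
theorem stmt_0 (f : ℝ → ℝ) (hf : ContDiffOn ℝ 2 f (Set.Ioi (0 : ℝ))) :
    (∀ x₁ x₂ : ℝ, (x₁, x₂) ≠ (0, 0) →
      laplacian2 (vortexPsi f) x₁ x₂ +
        ((1 - ‖vortexPsi f x₁ x₂‖ ^ 2 : ℝ) : ℂ) * vortexPsi f x₁ x₂ = 0) ↔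
    (∀ r : ℝ, 0 < r →
      deriv (deriv f) r + deriv f r / r + f r * (1 - f r ^ 2 - 1 / r ^ 2) = 0) := by
  constructor
  · intro hPDE r hr
    have h : 0 < r ^ 2 + (0 : ℝ) ^ 2 := by positivity
    have hsq : Real.sqrt (r ^ 2 + (0 : ℝ) ^ 2) = r := by
      rw [show r ^ 2 + (0:ℝ) ^ 2 = r ^ 2 by ring, Real.sqrt_sq hr.le]
    have hk := key f hf r 0 h
    rw [hPDE r 0 (by simp [hr.ne'])] at hk
    rw [hsq] at hk
    have hk' : (((deriv (deriv f) r + deriv f r / r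
        + f r * (1 - f r ^ 2 - 1 / r ^ 2)) / r : ℝ) : ℂ) * (r : ℂ) = 0 := by
      simpa using hk.symm
    rw [show ((r:ℂ)) = (((r : ℝ) : ℂ)) from rfl, ← Complex.ofReal_mul,
      Complex.ofReal_eq_zero] at hk'
    rw [div_mul_cancel₀ _ hr.ne'] at hk'
    exact hk'
  · intro hODE a b hne
    have h := pospt hne
    have hr : 0 < Real.sqrt (a ^ 2 + b ^ 2) := Real.sqrt_pos.2 h
    have hk := key f hf a b h
    rw [hODE _ hr] at hk
    rw [hk]
    simp
end

section
/- Define the Padé approximant ρ₂(r) = ((11/32)r² + (11/384)r⁴)/(1 + (1/3)r² + (11/384)r⁴) (these coefficients are a₁ = 11/32, b₁ = (5−32a₁)/(48−192a₁) = 1/3, a₂ = a₁(b₁−1/4) = 11/384). Let E₂(r) = ρ₂''(r) + ρ₂'(r)/r − (ρ₂'(r))²/(2ρ₂(r)) − 2ρ₂(r)/r² + 2(1 − ρ₂(r))ρ₂(r) be the residual of the density equation. Then lim_{r→0⁺} E₂(r)/r⁶ = 0. -/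
/-- The order-2 diagonal Padé approximant of the vortex density,
with coefficients `a₁ = 11/32`, `b₁ = 1/3`, `a₂ = 11/384`. -/
noncomputable def rho2 (r : ℝ) : ℝ :=
  ((11 / 32) * r ^ 2 + (11 / 384) * r ^ 4) / (1 + (1 / 3) * r ^ 2 + (11 / 384) * r ^ 4)

/-- The residual of the density equation for `rho2`. -/
noncomputable def E2 (r : ℝ) : ℝ :=
  deriv (deriv rho2) r + deriv rho2 r / r - (deriv rho2 r) ^ 2 / (2 * rho2 r)
    - 2 * rho2 r / r ^ 2 + 2 * (1 - rho2 r) * rho2 r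

/-- First derivative of `rho2`, as an explicit rational function. -/
noncomputable def f1 (r : ℝ) : ℝ :=
  ((11 / 16) * r + (11 / 96) * r ^ 3 - (11 / 18432) * r ^ 5) /
    (1 + (1 / 3) * r ^ 2 + (11 / 384) * r ^ 4) ^ 2

/-- Second derivative of `rho2`, as an explicit rational function. -/
noncomputable def f2 (r : ℝ) : ℝ :=
  ((11 / 16 + (11 / 32) * r ^ 2 - (55 / 18432) * r ^ 4) *
      (1 + (1 / 3) * r ^ 2 + (11 / 384) * r ^ 4) ^ 2 -
    ((11 / 16) * r + (11 / 96) * r ^ 3 - (11 / 18432) * r ^ 5) *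
      (2 * (1 + (1 / 3) * r ^ 2 + (11 / 384) * r ^ 4) * ((2 / 3) * r + (11 / 96) * r ^ 3))) /
    ((1 + (1 / 3) * r ^ 2 + (11 / 384) * r ^ 4) ^ 2) ^ 2

lemma Qpos (r : ℝ) : 0 < 1 + (1 / 3) * r ^ 2 + (11 / 384) * r ^ 4 := by positivity

lemma hQ' (r : ℝ) :
    HasDerivAt (fun x : ℝ => 1 + (1 / 3) * x ^ 2 + (11 / 384) * x ^ 4)
      ((2 / 3) * r + (11 / 96) * r ^ 3) r := by
  have h := ((hasDerivAt_const r (1 : ℝ)).add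
      ((hasDerivAt_pow 2 r).const_mul ((1 : ℝ) / 3))).add
      ((hasDerivAt_pow 4 r).const_mul ((11 : ℝ) / 384))
  refine h.congr_deriv ?_
  push_cast
  ring

lemma hP' (r : ℝ) :
    HasDerivAt (fun x : ℝ => (11 / 32) * x ^ 2 + (11 / 384) * x ^ 4)
      ((11 / 16) * r + (11 / 96) * r ^ 3) r := by
  have h := ((hasDerivAt_pow 2 r).const_mul ((11 : ℝ) / 32)).add
      ((hasDerivAt_pow 4 r).const_mul ((11 : ℝ) / 384))
  refine h.congr_deriv ?_
  push_cast
  ring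

lemma hasDeriv_rho2 (r : ℝ) : HasDerivAt rho2 (f1 r) r := by
  have h := (hP' r).div (hQ' r) (ne_of_gt (Qpos r))
  have heq : f1 r =
      (((11 / 16) * r + (11 / 96) * r ^ 3) * (1 + (1 / 3) * r ^ 2 + (11 / 384) * r ^ 4) -
        ((11 / 32) * r ^ 2 + (11 / 384) * r ^ 4) * ((2 / 3) * r + (11 / 96) * r ^ 3)) /
        (1 + (1 / 3) * r ^ 2 + (11 / 384) * r ^ 4) ^ 2 := by
    unfold f1
    congr 1
    ring
  rw [heq]
  exact h

lemma deriv_rho2_eq : deriv rho2 = f1 := funext fun r => (hasDeriv_rho2 r).deriv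

lemma hA' (r : ℝ) :
    HasDerivAt (fun x : ℝ => (11 / 16) * x + (11 / 96) * x ^ 3 - (11 / 18432) * x ^ 5)
      (11 / 16 + (11 / 32) * r ^ 2 - (55 / 18432) * r ^ 4) r := by
  have h := (((hasDerivAt_id r).const_mul ((11 : ℝ) / 16)).add
      ((hasDerivAt_pow 3 r).const_mul ((11 : ℝ) / 96))).sub
      ((hasDerivAt_pow 5 r).const_mul ((11 : ℝ) / 18432))
  refine h.congr_deriv ?_
  push_cast
  ring

lemma hasDeriv_f1 (r : ℝ) : HasDerivAt f1 (f2 r) r := by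
  have hB : HasDerivAt (fun x : ℝ => (1 + (1 / 3) * x ^ 2 + (11 / 384) * x ^ 4) ^ 2)
      (2 * (1 + (1 / 3) * r ^ 2 + (11 / 384) * r ^ 4) * ((2 / 3) * r + (11 / 96) * r ^ 3)) r := by
    have h := (hQ' r).pow 2
    refine h.congr_deriv ?_
    push_cast
    ring
  have hBne : (1 + (1 / 3) * r ^ 2 + (11 / 384) * r ^ 4) ^ 2 ≠ 0 :=
    pow_ne_zero 2 (ne_of_gt (Qpos r))
  exact (hA' r).div hB hBne

lemma deriv_deriv_rho2_eq : deriv (deriv rho2) = f2 := by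
  rw [deriv_rho2_eq]
  exact funext fun r => (hasDeriv_f1 r).deriv

/-- The key algebraic identity on `(0, ∞)`. -/
lemma key_s3 (r : ℝ) (hr : 0 < r) :
    E2 r / r ^ 6 =
      (-(253 / 589824) * r ^ 2 - (341 / 3538944) * r ^ 4 - (605 / 113246208) * r ^ 6) /
        (1 + (13 / 12) * r ^ 2 + (193 / 384) * r ^ 4 + (1787 / 13824) * r ^ 6 +
          (26371 / 1327104) * r ^ 8 + (3223 / 1769472) * r ^ 10 +
          (5203 / 56623104) * r ^ 12 + (1331 / 679477248) * r ^ 14) := by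
  have hrne : r ≠ 0 := ne_of_gt hr
  have hQne : (1 + (1 / 3) * r ^ 2 + (11 / 384) * r ^ 4) ≠ 0 := ne_of_gt (Qpos r)
  have hPne : ((11 / 32) * r ^ 2 + (11 / 384) * r ^ 4) ≠ 0 := by positivity
  have hDne : (1 + (13 / 12) * r ^ 2 + (193 / 384) * r ^ 4 + (1787 / 13824) * r ^ 6 +
      (26371 / 1327104) * r ^ 8 + (3223 / 1769472) * r ^ 10 +
      (5203 / 56623104) * r ^ 12 + (1331 / 679477248) * r ^ 14) ≠ 0 := by positivity
  unfold E2
  rw [deriv_deriv_rho2_eq, deriv_rho2_eq]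
  unfold f1 f2 rho2
  field_simp
  ring

/-- The residual of the density equation for the order-2 Padé approximant vanishes to
order higher than `r⁶` at the origin: `lim_{r→0⁺} E₂(r)/r⁶ = 0`. -/
theorem stmt_3 :
    Filter.Tendsto (fun r : ℝ => E2 r / r ^ 6) (nhdsWithin 0 (Set.Ioi 0)) (nhds 0) := by
  have hcont : Filter.Tendsto
      (fun r : ℝ =>
        (-(253 / 589824) * r ^ 2 - (341 / 3538944) * r ^ 4 - (605 / 113246208) * r ^ 6) /
          (1 + (13 / 12) * r ^ 2 + (193 / 384) * r ^ 4 + (1787 / 13824) * r ^ 6 +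
            (26371 / 1327104) * r ^ 8 + (3223 / 1769472) * r ^ 10 +
            (5203 / 56623104) * r ^ 12 + (1331 / 679477248) * r ^ 14))
      (nhdsWithin 0 (Set.Ioi 0)) (nhds 0) := by
    have hc : ContinuousAt
        (fun r : ℝ =>
          (-(253 / 589824) * r ^ 2 - (341 / 3538944) * r ^ 4 - (605 / 113246208) * r ^ 6) /
            (1 + (13 / 12) * r ^ 2 + (193 / 384) * r ^ 4 + (1787 / 13824) * r ^ 6 +
              (26371 / 1327104) * r ^ 8 + (3223 / 1769472) * r ^ 10 +
              (5203 / 56623104) * r ^ 12 + (1331 / 679477248) * r ^ 14)) 0 := by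
      apply ContinuousAt.div
      · fun_prop
      · fun_prop
      · norm_num
    have h0 : (fun r : ℝ =>
        (-(253 / 589824) * r ^ 2 - (341 / 3538944) * r ^ 4 - (605 / 113246208) * r ^ 6) /
          (1 + (13 / 12) * r ^ 2 + (193 / 384) * r ^ 4 + (1787 / 13824) * r ^ 6 +
            (26371 / 1327104) * r ^ 8 + (3223 / 1769472) * r ^ 10 +
            (5203 / 56623104) * r ^ 12 + (1331 / 679477248) * r ^ 14)) 0 = 0 := by norm_num
    refine Filter.Tendsto.mono_left ?_ nhdsWithin_le_nhds
    have := hc.tendsto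
    convert this using 2
    norm_num
  refine hcont.congr' ?_
  filter_upwards [self_mem_nhdsWithin] with r hr
  exact (key_s3 r hr).symm
end

section
/- Let a₁ ∈ (0.34003812, 0.34003813) satisfy 21233664a₁⁵ − 9732096a₁⁴ − 62464a₁³ + 137856a₁² + 62772a₁ − 1247 = 0, and assume 7680a₁² − 1680a₁ − 330 ≠ 0 and 4608a₁ − 1152 ≠ 0. Define b₁ = (2304a₁³ + 656a₁² − 421a₁ − 28)/(7680a₁² − 1680a₁ − 330), a₂ = a₁(b₁ − 1/4), b₂ = (768a₁b₁ − 120b₁ − 384a₁² + 8a₁ + 7)/(4608a₁ − 1152), a₃ = a₁(192b₂ − 48b₁ + 16a₁ + 5)/192, and ρ₃(r) = (a₁r² + a₂r⁴ + a₃r⁶)/(1 + b₁r² + b₂r⁴ + a₃r⁶). Let E₃(r) = ρ₃''(r) + ρ₃'(r)/r − (ρ₃'(r))²/(2ρ₃(r)) − 2ρ₃(r)/r² + 2(1 − ρ₃(r))ρ₃(r). Then lim_{r→0⁺} E₃(r)/r¹⁰ = 0. -/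
set_option maxHeartbeats 3000000 in
/-- For the order-3 diagonal Padé approximant `ρ₃` of the vortex density, built from the
physically acceptable root `a₁ ≈ 0.34003812` of the associated quintic, the residual
`E₃` of the density equation satisfies `lim_{r→0⁺} E₃(r)/r¹⁰ = 0`. -/
theorem stmt_9 (a₁ b₁ a₂ b₂ a₃ : ℝ) (ρ₃ E₃ : ℝ → ℝ)
    (ha₁_mem : a₁ ∈ Set.Ioo (0.34003812 : ℝ) 0.34003813)
    (ha₁_root : 21233664 * a₁ ^ 5 - 9732096 * a₁ ^ 4 - 62464 * a₁ ^ 3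
      + 137856 * a₁ ^ 2 + 62772 * a₁ - 1247 = 0)
    (hden₁ : 7680 * a₁ ^ 2 - 1680 * a₁ - 330 ≠ 0)
    (hden₂ : 4608 * a₁ - 1152 ≠ 0)
    (hb₁ : b₁ = (2304 * a₁ ^ 3 + 656 * a₁ ^ 2 - 421 * a₁ - 28)
      / (7680 * a₁ ^ 2 - 1680 * a₁ - 330))
    (ha₂ : a₂ = a₁ * (b₁ - 1 / 4))
    (hb₂ : b₂ = (768 * a₁ * b₁ - 120 * b₁ - 384 * a₁ ^ 2 + 8 * a₁ + 7)
      / (4608 * a₁ - 1152))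
    (ha₃ : a₃ = a₁ * (192 * b₂ - 48 * b₁ + 16 * a₁ + 5) / 192)
    (hρ₃ : ∀ r : ℝ, ρ₃ r = (a₁ * r ^ 2 + a₂ * r ^ 4 + a₃ * r ^ 6)
      / (1 + b₁ * r ^ 2 + b₂ * r ^ 4 + a₃ * r ^ 6))
    (hE₃ : ∀ r : ℝ, E₃ r = deriv (deriv ρ₃) r + deriv ρ₃ r / r
      - (deriv ρ₃ r) ^ 2 / (2 * ρ₃ r) - 2 * ρ₃ r / r ^ 2 + 2 * (1 - ρ₃ r) * ρ₃ r) :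
    Filter.Tendsto (fun r : ℝ => E₃ r / r ^ 10) (nhdsWithin 0 (Set.Ioi 0)) (nhds 0) := by
  obtain ⟨ha₁l, _⟩ := ha₁_mem
  have ha₁pos : (0:ℝ) < a₁ := lt_trans (by norm_num) ha₁l
  have hB1 : b₁ * (7680 * a₁ ^ 2 - 1680 * a₁ - 330)
      = 2304 * a₁ ^ 3 + 656 * a₁ ^ 2 - 421 * a₁ - 28 := by
    rw [hb₁, div_mul_cancel₀ _ hden₁]
  have hB2 : b₂ * (4608 * a₁ - 1152)
      = 768 * a₁ * b₁ - 120 * b₁ - 384 * a₁ ^ 2 + 8 * a₁ + 7 := by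
    rw [hb₂, div_mul_cancel₀ _ hden₂]
  have hA3 : 192 * a₃ = a₁ * (192 * b₂ - 48 * b₁ + 16 * a₁ + 5) := by
    rw [ha₃]; ring
  have hc3 : (-16*a₁ ^ 2*b₁ + 4*a₁ ^ 2 + 16*a₁*a₂ : ℝ) = 0 := by
    have hne : ((192:ℝ) ^ 0 * ((4608 * a₁ - 1152) ^ 0 * (7680 * a₁ ^ 2 - 1680 * a₁ - 330) ^ 0)) ≠ 0 :=
      mul_ne_zero (by norm_num) (mul_ne_zero (pow_ne_zero _ hden₂) (pow_ne_zero _ hden₁))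
    have h : (-16*a₁ ^ 2*b₁ + 4*a₁ ^ 2 + 16*a₁*a₂ : ℝ) * ((192:ℝ) ^ 0 * ((4608 * a₁ - 1152) ^ 0 * (7680 * a₁ ^ 2 - 1680 * a₁ - 330) ^ 0)) = 0 := by
      linear_combination (16*a₁) * (4608 * a₁ - 1152) ^ 0 * (7680 * a₁ ^ 2 - 1680 * a₁ - 330) ^ 0 * ha₂
    exact (mul_eq_zero.mp h).resolve_right hne
  have hc4 : (-4*a₁ ^ 3 - 4*a₁ ^ 2*b₁ ^ 2 + 8*a₁ ^ 2*b₁ - 48*a₁ ^ 2*b₂ - 8*a₁*a₂*b₁ + 8*a₁*a₂ + 48*a₁*a₃ + 12*a₂ ^ 2 : ℝ) = 0 := by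
    have hne : ((192:ℝ) ^ 1 * ((4608 * a₁ - 1152) ^ 0 * (7680 * a₁ ^ 2 - 1680 * a₁ - 330) ^ 0)) ≠ 0 :=
      mul_ne_zero (by norm_num) (mul_ne_zero (pow_ne_zero _ hden₂) (pow_ne_zero _ hden₁))
    have h : (-4*a₁ ^ 3 - 4*a₁ ^ 2*b₁ ^ 2 + 8*a₁ ^ 2*b₁ - 48*a₁ ^ 2*b₂ - 8*a₁*a₂*b₁ + 8*a₁*a₂ + 48*a₁*a₃ + 12*a₂ ^ 2 : ℝ) * ((192:ℝ) ^ 1 * ((4608 * a₁ - 1152) ^ 0 * (7680 * a₁ ^ 2 - 1680 * a₁ - 330) ^ 0)) = 0 := by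
      linear_combination (48*a₁) * (4608 * a₁ - 1152) ^ 0 * (7680 * a₁ ^ 2 - 1680 * a₁ - 330) ^ 0 * hA3 + (768*a₁*b₁ + 960*a₁ + 2304*a₂) * (4608 * a₁ - 1152) ^ 0 * (7680 * a₁ ^ 2 - 1680 * a₁ - 330) ^ 0 * ha₂
    exact (mul_eq_zero.mp h).resolve_right hne
  have hc5 : (-4*a₁ ^ 3*b₁ - 12*a₁ ^ 2*a₂ - 96*a₁ ^ 2*a₃ + 4*a₁ ^ 2*b₁ ^ 2 - 16*a₁ ^ 2*b₁*b₂ + 8*a₁ ^ 2*b₂ + 16*a₁*a₂*b₁ - 80*a₁*a₂*b₂ + 48*a₁*a₃*b₁ + 8*a₁*a₃ + 4*a₂ ^ 2 + 48*a₂*a₃ : ℝ) = 0 := by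
    have hne : ((192:ℝ) ^ 1 * ((4608 * a₁ - 1152) ^ 1 * (7680 * a₁ ^ 2 - 1680 * a₁ - 330) ^ 0)) ≠ 0 :=
      mul_ne_zero (by norm_num) (mul_ne_zero (pow_ne_zero _ hden₂) (pow_ne_zero _ hden₁))
    have h : (-4*a₁ ^ 3*b₁ - 12*a₁ ^ 2*a₂ - 96*a₁ ^ 2*a₃ + 4*a₁ ^ 2*b₁ ^ 2 - 16*a₁ ^ 2*b₁*b₂ + 8*a₁ ^ 2*b₂ + 16*a₁*a₂*b₁ - 80*a₁*a₂*b₂ + 48*a₁*a₃*b₁ + 8*a₁*a₃ + 4*a₂ ^ 2 + 48*a₂*a₃ : ℝ) * ((192:ℝ) ^ 1 * ((4608 * a₁ - 1152) ^ 1 * (7680 * a₁ ^ 2 - 1680 * a₁ - 330) ^ 0)) = 0 := by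
      linear_combination (-96*a₁ ^ 2 + 48*a₁*b₁ + 8*a₁ + 48*a₂) * (4608 * a₁ - 1152) ^ 1 * (7680 * a₁ ^ 2 - 1680 * a₁ - 330) ^ 0 * hA3 + (-1536*a₁ ^ 2 + 1536*a₁*b₁ - 6144*a₁*b₂ + 48*a₁ + 768*a₂) * (4608 * a₁ - 1152) ^ 1 * (7680 * a₁ ^ 2 - 1680 * a₁ - 330) ^ 0 * ha₂ + (-18432*a₁ ^ 3 + 4608*a₁ ^ 2) * (7680 * a₁ ^ 2 - 1680 * a₁ - 330) ^ 0 * hB2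
    exact (mul_eq_zero.mp h).resolve_right hne
  have hc6 : (-4*a₁ ^ 3*b₂ - 12*a₁ ^ 2*a₂*b₁ - 40*a₁ ^ 2*a₃*b₁ - 4*a₁ ^ 2*a₃ + 8*a₁ ^ 2*b₁*b₂ - 12*a₁*a₂ ^ 2 - 184*a₁*a₂*a₃ + 8*a₁*a₂*b₁ ^ 2 - 24*a₁*a₂*b₁*b₂ + 16*a₁*a₂*b₂ + 24*a₁*a₃*b₁ ^ 2 + 16*a₁*a₃*b₁ - 32*a₁*a₃*b₂ + 8*a₂ ^ 2*b₁ - 40*a₂ ^ 2*b₂ + 40*a₂*a₃*b₁ + 8*a₂*a₃ + 32*a₃ ^ 2 : ℝ) = 0 := by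
    have hne : ((192:ℝ) ^ 2 * ((4608 * a₁ - 1152) ^ 1 * (7680 * a₁ ^ 2 - 1680 * a₁ - 330) ^ 1)) ≠ 0 :=
      mul_ne_zero (by norm_num) (mul_ne_zero (pow_ne_zero _ hden₂) (pow_ne_zero _ hden₁))
    have h : (-4*a₁ ^ 3*b₂ - 12*a₁ ^ 2*a₂*b₁ - 40*a₁ ^ 2*a₃*b₁ - 4*a₁ ^ 2*a₃ + 8*a₁ ^ 2*b₁*b₂ - 12*a₁*a₂ ^ 2 - 184*a₁*a₂*a₃ + 8*a₁*a₂*b₁ ^ 2 - 24*a₁*a₂*b₁*b₂ + 16*a₁*a₂*b₂ + 24*a₁*a₃*b₁ ^ 2 + 16*a₁*a₃*b₁ - 32*a₁*a₃*b₂ + 8*a₂ ^ 2*b₁ - 40*a₂ ^ 2*b₂ + 40*a₂*a₃*b₁ + 8*a₂*a₃ + 32*a₃ ^ 2 : ℝ) * ((192:ℝ) ^ 2 * ((4608 * a₁ - 1152) ^ 1 * (7680 * a₁ ^ 2 - 1680 * a₁ - 330) ^ 1)) = 0 := by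
      linear_combination (-7680*a₁ ^ 2*b₁ - 256*a₁ ^ 2 - 35328*a₁*a₂ + 4608*a₁*b₁ ^ 2 + 1536*a₁*b₁ + 160*a₁ + 7680*a₂*b₁ + 1536*a₂ + 6144*a₃) * (4608 * a₁ - 1152) ^ 1 * (7680 * a₁ ^ 2 - 1680 * a₁ - 330) ^ 1 * hA3 + (-565248*a₁ ^ 3 + 933888*a₁ ^ 2*b₁ - 6782976*a₁ ^ 2*b₂ - 41472*a₁ ^ 2 - 442368*a₁*a₂ + 221184*a₁*b₁ ^ 2 - 884736*a₁*b₁*b₂ - 109056*a₁*b₁ + 1253376*a₁*b₂ + 7680*a₁ + 294912*a₂*b₁ - 1474560*a₂*b₂) * (4608 * a₁ - 1152) ^ 1 * (7680 * a₁ ^ 2 - 1680 * a₁ - 330) ^ 1 * ha₂ + (-8257536*a₁ ^ 3*b₁ + 1499136*a₁ ^ 3 + 2064384*a₁ ^ 2*b₁ - 282624*a₁ ^ 2) * (7680 * a₁ ^ 2 - 1680 * a₁ - 330) ^ 1 * hB2 + (-188743680*a₁ ^ 4 + 41287680*a₁ ^ 3 + 8110080*a₁ ^ 2) * hB1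
    exact (mul_eq_zero.mp h).resolve_right hne
  have hc7 : (-4*a₁ ^ 3*a₃ - 12*a₁ ^ 2*a₂*b₂ - 4*a₁ ^ 2*a₃*b₁ + 4*a₁ ^ 2*b₂ ^ 2 - 12*a₁*a₂ ^ 2*b₁ - 80*a₁*a₂*a₃*b₁ - 8*a₁*a₂*a₃ + 16*a₁*a₂*b₁*b₂ - 144*a₁*a₃ ^ 2 + 8*a₁*a₃*b₁ ^ 2 + 16*a₁*a₃*b₁*b₂ + 16*a₁*a₃*b₂ - 4*a₂ ^ 3 - 96*a₂ ^ 2*a₃ + 4*a₂ ^ 2*b₁ ^ 2 - 16*a₂ ^ 2*b₁*b₂ + 8*a₂ ^ 2*b₂ + 16*a₂*a₃*b₁ ^ 2 + 16*a₂*a₃*b₁ - 48*a₂*a₃*b₂ + 32*a₃ ^ 2*b₁ + 4*a₃ ^ 2 : ℝ) = 0 := by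
    have hne : ((192:ℝ) ^ 2 * ((4608 * a₁ - 1152) ^ 2 * (7680 * a₁ ^ 2 - 1680 * a₁ - 330) ^ 2)) ≠ 0 :=
      mul_ne_zero (by norm_num) (mul_ne_zero (pow_ne_zero _ hden₂) (pow_ne_zero _ hden₁))
    have h : (-4*a₁ ^ 3*a₃ - 12*a₁ ^ 2*a₂*b₂ - 4*a₁ ^ 2*a₃*b₁ + 4*a₁ ^ 2*b₂ ^ 2 - 12*a₁*a₂ ^ 2*b₁ - 80*a₁*a₂*a₃*b₁ - 8*a₁*a₂*a₃ + 16*a₁*a₂*b₁*b₂ - 144*a₁*a₃ ^ 2 + 8*a₁*a₃*b₁ ^ 2 + 16*a₁*a₃*b₁*b₂ + 16*a₁*a₃*b₂ - 4*a₂ ^ 3 - 96*a₂ ^ 2*a₃ + 4*a₂ ^ 2*b₁ ^ 2 - 16*a₂ ^ 2*b₁*b₂ + 8*a₂ ^ 2*b₂ + 16*a₂*a₃*b₁ ^ 2 + 16*a₂*a₃*b₁ - 48*a₂*a₃*b₂ + 32*a₃ ^ 2*b₁ + 4*a₃ ^ 2 : ℝ) * ((192:ℝ) ^ 2 * ((4608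 * a₁ - 1152) ^ 2 * (7680 * a₁ ^ 2 - 1680 * a₁ - 330) ^ 2)) = 0 := by
      linear_combination (-3072*a₁ ^ 3 + 6656*a₁ ^ 2*b₁ - 27648*a₁ ^ 2*b₂ - 656*a₁ ^ 2 - 15360*a₁*a₂*b₁ - 1536*a₁*a₂ - 27648*a₁*a₃ + 9216*a₁*b₁*b₂ - 32*a₁*b₁ + 3840*a₁*b₂ + 20*a₁ - 18432*a₂ ^ 2 + 3072*a₂*b₁ ^ 2 + 3072*a₂*b₁ - 9216*a₂*b₂ + 6144*a₃*b₁ + 768*a₃) * (4608 * a₁ - 1152) ^ 2 * (7680 * a₁ ^ 2 - 1680 * a₁ - 330) ^ 2 * hA3 + (-540672*a₁ ^ 3*b₁ + 49152*a₁ ^ 3 - 294912*a₁ ^ 2*a₂ + 1081344*a₁ ^ 2*b₁ ^ 2 - 6488064*a₁ ^ 2*b₁*b₂ - 82944*a₁ ^ 2*b₁ + 6144*a₁ ^ 2 + 294912*a₁*a₂*b₁ - 3538944*a₁*a₂*b₂ - 55296*a₁*a₂ - 168960*a₁*b₁ ^ 2 + 2064384*a₁*b₁*b₂ + 15360*a₁*b₁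 - 1769472*a₁*b₂ ^ 2 - 119808*a₁*b₂ - 147456*a₂ ^ 2 + 147456*a₂*b₁ ^ 2 - 589824*a₂*b₁*b₂ + 294912*a₂*b₂) * (4608 * a₁ - 1152) ^ 2 * (7680 * a₁ ^ 2 - 1680 * a₁ - 330) ^ 2 * ha₂ + (-2717908992*a₁ ^ 5 - 29896998912*a₁ ^ 4*b₁ ^ 2 + 16080961536*a₁ ^ 4*b₁ - 24461180928*a₁ ^ 4*b₂ - 297271296*a₁ ^ 4 + 14948499456*a₁ ^ 3*b₁ ^ 2 - 6978797568*a₁ ^ 3*b₁ + 12230590464*a₁ ^ 3*b₂ + 451215360*a₁ ^ 3 - 1868562432*a₁ ^ 2*b₁ ^ 2 + 739639296*a₁ ^ 2*b₁ - 1528823808*a₁ ^ 2*b₂ - 51757056*a₁ ^ 2) * (7680 * a₁ ^ 2 - 1680 * a₁ - 330) ^ 2 * hB2 + (3005789912432640*a₁ ^ 8 - 16698832846848000*a₁ ^ 7*b₁ + 615769461227520*a₁ ^ 7 + 11480447582208000*a₁ ^ 6*b₁ - 1718805646540800*a₁ ^ 6 - 1190444138496000*a₁ ^ 5*b₁ +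 346574165114880*a₁ ^ 5 - 472916164608000*a₁ ^ 4*b₁ + 52983937105920*a₁ ^ 4 + 47648342016000*a₁ ^ 3*b₁ - 9663440486400*a₁ ^ 3 + 7707820032000*a₁ ^ 2*b₁ - 931945512960*a₁ ^ 2) * hB1 + (326149079040*a₁ ^ 6 - 234419650560*a₁ ^ 5 + 42042654720*a₁ ^ 4 + 2548039680*a₁ ^ 3 - 875888640*a₁ ^ 2) * ha₁_root
    exact (mul_eq_zero.mp h).resolve_right hne

  have hρfun : ρ₃ = fun x : ℝ => (a₁ * x ^ 2 + a₂ * x ^ 4 + a₃ * x ^ 6) / (1 + b₁ * x ^ 2 + b₂ * x ^ 4 + a₃ * x ^ 6) := funext hρ₃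
  have hder1 : ∀ x : ℝ, (1 + b₁ * x ^ 2 + b₂ * x ^ 4 + a₃ * x ^ 6) ≠ 0 →
      HasDerivAt ρ₃ (((2 * a₁ * x + 4 * a₂ * x ^ 3 + 6 * a₃ * x ^ 5) * (1 + b₁ * x ^ 2 + b₂ * x ^ 4 + a₃ * x ^ 6) - (a₁ * x ^ 2 + a₂ * x ^ 4 + a₃ * x ^ 6) * (2 * b₁ * x + 4 * b₂ * x ^ 3 + 6 * a₃ * x ^ 5)) / (1 + b₁ * x ^ 2 + b₂ * x ^ 4 + a₃ * x ^ 6) ^ 2) x := by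
    intro x hx
    rw [hρfun]
    have hp : HasDerivAt (fun y : ℝ => a₁ * y ^ 2 + a₂ * y ^ 4 + a₃ * y ^ 6)
        (2 * a₁ * x + 4 * a₂ * x ^ 3 + 6 * a₃ * x ^ 5) x := by
      have h := (((hasDerivAt_pow 2 x).const_mul a₁).add
        ((hasDerivAt_pow 4 x).const_mul a₂)).add ((hasDerivAt_pow 6 x).const_mul a₃)
      convert h using 1
      rfl; rfl; rfl
      push_cast; ring
    have hq : HasDerivAt (fun y : ℝ => 1 + b₁ * y ^ 2 + b₂ * y ^ 4 + a₃ * y ^ 6)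
        (2 * b₁ * x + 4 * b₂ * x ^ 3 + 6 * a₃ * x ^ 5) x := by
      have h := ((((hasDerivAt_const x (1:ℝ)).add ((hasDerivAt_pow 2 x).const_mul b₁)).add
        ((hasDerivAt_pow 4 x).const_mul b₂)).add ((hasDerivAt_pow 6 x).const_mul a₃))
      convert h using 1
      rfl; rfl; rfl
      push_cast; ring
    exact hp.div hq hx
  have hder2 : ∀ x : ℝ, (1 + b₁ * x ^ 2 + b₂ * x ^ 4 + a₃ * x ^ 6) ≠ 0 →
      HasDerivAt (fun y : ℝ => (((2 * a₁ * y + 4 * a₂ * y ^ 3 + 6 * a₃ * y ^ 5) * (1 + b₁ * y ^ 2 + b₂ * y ^ 4 + a₃ * y ^ 6) - (a₁ * y ^ 2 + a₂ * y ^ 4 + a₃ * y ^ 6) * (2 * b₁ * y + 4 * b₂ * y ^ 3 + 6 * a₃ * y ^ 5)) / (1 + b₁ * y ^ 2 + b₂ * y ^ 4 + a₃ * y ^ 6) ^ 2)) ((((2 * a₁ + 12 * a₂ * x ^ 2 + 30 * a₃ * x ^ 4) * (1 + b₁ * x ^ 2 + b₂ * x ^ 4 + a₃ * x ^ 6) -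 (a₁ * x ^ 2 + a₂ * x ^ 4 + a₃ * x ^ 6) * (2 * b₁ + 12 * b₂ * x ^ 2 + 30 * a₃ * x ^ 4)) * (1 + b₁ * x ^ 2 + b₂ * x ^ 4 + a₃ * x ^ 6) ^ 2 - ((2 * a₁ * x + 4 * a₂ * x ^ 3 + 6 * a₃ * x ^ 5) * (1 + b₁ * x ^ 2 + b₂ * x ^ 4 + a₃ * x ^ 6) - (a₁ * x ^ 2 + a₂ * x ^ 4 + a₃ * x ^ 6) * (2 * b₁ * x + 4 * b₂ * x ^ 3 + 6 * a₃ * x ^ 5)) * (2 * (1 + b₁ * x ^ 2 + b₂ * x ^ 4 + a₃ * x ^ 6) * (2 * b₁ * x + 4 * b₂ * x ^ 3 + 6 * a₃ * x ^ 5))) / ((1 + b₁ * x ^ 2 + b₂ * x ^ 4 + a₃ * x ^ 6) ^ 2) ^ 2) x := by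
    intro x hx
    have hp : HasDerivAt (fun y : ℝ => a₁ * y ^ 2 + a₂ * y ^ 4 + a₃ * y ^ 6)
        (2 * a₁ * x + 4 * a₂ * x ^ 3 + 6 * a₃ * x ^ 5) x := by
      have h := (((hasDerivAt_pow 2 x).const_mul a₁).add
        ((hasDerivAt_pow 4 x).const_mul a₂)).add ((hasDerivAt_pow 6 x).const_mul a₃)
      convert h using 1
      rfl; rfl; rfl
      push_cast; ring
    have hq : HasDerivAt (fun y : ℝ => 1 + b₁ * y ^ 2 + b₂ * y ^ 4 + a₃ * y ^ 6)
        (2 * b₁ * x + 4 * b₂ * x ^ 3 + 6 * a₃ * x ^ 5) x := by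
      have h := ((((hasDerivAt_const x (1:ℝ)).add ((hasDerivAt_pow 2 x).const_mul b₁)).add
        ((hasDerivAt_pow 4 x).const_mul b₂)).add ((hasDerivAt_pow 6 x).const_mul a₃))
      convert h using 1
      rfl; rfl; rfl
      push_cast; ring
    have hpp : HasDerivAt (fun y : ℝ => 2 * a₁ * y + 4 * a₂ * y ^ 3 + 6 * a₃ * y ^ 5)
        (2 * a₁ + 12 * a₂ * x ^ 2 + 30 * a₃ * x ^ 4) x := by
      have h := (((hasDerivAt_pow 1 x).const_mul (2*a₁)).add
        ((hasDerivAt_pow 3 x).const_mul (4*a₂))).add ((hasDerivAt_pow 5 x).const_mul (6*a₃))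
      convert h using 1
      rfl; rfl
      · funext y; simp only [Pi.add_apply]; ring
      · push_cast; ring
    have hqp : HasDerivAt (fun y : ℝ => 2 * b₁ * y + 4 * b₂ * y ^ 3 + 6 * a₃ * y ^ 5)
        (2 * b₁ + 12 * b₂ * x ^ 2 + 30 * a₃ * x ^ 4) x := by
      have h := (((hasDerivAt_pow 1 x).const_mul (2*b₁)).add
        ((hasDerivAt_pow 3 x).const_mul (4*b₂))).add ((hasDerivAt_pow 5 x).const_mul (6*a₃))
      convert h using 1
      rfl; rfl
      · funext y; simp only [Pi.add_apply]; ring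
      · push_cast; ring
    have hD : HasDerivAt (fun y : ℝ => (2 * a₁ * y + 4 * a₂ * y ^ 3 + 6 * a₃ * y ^ 5) * (1 + b₁ * y ^ 2 + b₂ * y ^ 4 + a₃ * y ^ 6) - (a₁ * y ^ 2 + a₂ * y ^ 4 + a₃ * y ^ 6) * (2 * b₁ * y + 4 * b₂ * y ^ 3 + 6 * a₃ * y ^ 5))
        ((2 * a₁ + 12 * a₂ * x ^ 2 + 30 * a₃ * x ^ 4) * (1 + b₁ * x ^ 2 + b₂ * x ^ 4 + a₃ * x ^ 6) - (a₁ * x ^ 2 + a₂ * x ^ 4 + a₃ * x ^ 6) * (2 * b₁ + 12 * b₂ * x ^ 2 + 30 * a₃ * x ^ 4)) x := by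
      have h := (hpp.mul hq).sub (hp.mul hqp)
      convert h using 1
      rfl; rfl; rfl
      ring
    have hQ2 : HasDerivAt (fun y : ℝ => (1 + b₁ * y ^ 2 + b₂ * y ^ 4 + a₃ * y ^ 6) ^ 2) (2 * (1 + b₁ * x ^ 2 + b₂ * x ^ 4 + a₃ * x ^ 6) * (2 * b₁ * x + 4 * b₂ * x ^ 3 + 6 * a₃ * x ^ 5)) x := by
      have h := hq.pow 2
      convert h using 1
      rfl; rfl; rfl
      push_cast; ring
    exact hD.div hQ2 (pow_ne_zero 2 hx)
  have stage1 : ∀ P Q DP DQ DDP DDQ R : ℝ, R ≠ 0 → Q ≠ 0 → P ≠ 0 →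
      (((DDP * Q - P * DDQ) * Q ^ 2 - (DP * Q - P * DQ) * (2 * Q * DQ)) / (Q ^ 2) ^ 2) + ((DP * Q - P * DQ) / Q ^ 2) / R - ((DP * Q - P * DQ) / Q ^ 2) ^ 2 / (2 * (P / Q)) - 2 * (P / Q) / R ^ 2 + 2 * (1 - P / Q) * (P / Q)
      = (2 * R ^ 2 * P * ((DDP * Q - P * DDQ) * Q - 2 * (DP * Q - P * DQ) * DQ) + 2 * R * P * (DP * Q - P * DQ) * Q - R ^ 2 * (DP * Q - P * DQ) ^ 2 - 4 * P ^ 2 * Q ^ 2 + 4 * R ^ 2 * P * (Q - P) * P * Q) / (2 * R ^ 2 * P * Q ^ 3) := by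
    intro P Q DP DQ DDP DDQ R hR hQ hP
    field_simp
    ring
  set U : Set ℝ := {x : ℝ | (1 + b₁ * x ^ 2 + b₂ * x ^ 4 + a₃ * x ^ 6) ≠ 0} ∩ {x : ℝ | (a₁ + a₂ * x ^ 2 + a₃ * x ^ 4) ≠ 0} with hUdef
  have hUopen : IsOpen U := by
    apply IsOpen.inter
    · exact isOpen_ne_fun (by fun_prop) continuous_const
    · exact isOpen_ne_fun (by fun_prop) continuous_const
  have hU0 : (0:ℝ) ∈ U := by
    simp only [hUdef, Set.mem_inter_iff, Set.mem_setOf_eq]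
    constructor
    · norm_num
    · norm_num
      exact ne_of_gt ha₁pos
  have hev : (fun x : ℝ => x ^ 2 * ((-12*a₁ ^ 2*a₂*a₃ + 12*a₁ ^ 2*a₃ ^ 2 - 4*a₁ ^ 2*a₃*b₂ - 12*a₁*a₂ ^ 2*b₂ - 8*a₁*a₂*a₃*b₁ - 8*a₁*a₂*a₃*b₂ + 8*a₁*a₂*b₂ ^ 2 - 48*a₁*a₃ ^ 2*b₁ + 4*a₁*a₃ ^ 2 + 16*a₁*a₃*b₁*b₂ + 16*a₁*a₃*b₂ ^ 2 - 4*a₂ ^ 3*b₁ - 48*a₂ ^ 2*a₃*b₁ - 4*a₂ ^ 2*a₃ + 8*a₂ ^ 2*b₁*b₂ - 4*a₂ ^ 2*b₂ ^ 2 - 168*a₂*a₃ ^ 2 + 8*a₂*a₃*b₁ ^ 2 - 8*a₂*a₃*b₁*b₂ + 16*a₂*a₃*b₂ + 12*a₃ ^ 2*b₁ ^ 2 + 8*a₃ ^ 2*b₁ - 16*a₃ ^ 2*b₂) * x ^ 0 + (-8*a₁ ^ 2*a₃ ^ 2 - 12*a₁*a₂ ^ 2*a₃ + 16*a₁*a₂*a₃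 ^ 2 - 8*a₁*a₂*a₃*b₂ + 4*a₁*a₃ ^ 2*b₁ + 16*a₁*a₃ ^ 2*b₂ + 8*a₁*a₃*b₂ ^ 2 - 4*a₂ ^ 3*b₂ - 4*a₂ ^ 2*a₃*b₁ - 16*a₂ ^ 2*a₃*b₂ + 4*a₂ ^ 2*b₂ ^ 2 - 80*a₂*a₃ ^ 2*b₁ + 4*a₂*a₃ ^ 2 + 16*a₂*a₃*b₁*b₂ - 80*a₃ ^ 3 + 4*a₃ ^ 2*b₁ ^ 2 + 8*a₃ ^ 2*b₂) * x ^ 2 + (-16*a₁*a₂*a₃ ^ 2 + 24*a₁*a₃ ^ 3 + 4*a₁*a₃ ^ 2*b₂ - 4*a₂ ^ 3*a₃ - 4*a₂ ^ 2*a₃*b₂ + 4*a₂*a₃ ^ 2*b₁ - 24*a₂*a₃ ^ 2*b₂ + 8*a₂*a₃*b₂ ^ 2 - 40*a₃ ^ 3*b₁ + 4*a₃ ^ 3 + 8*a₃ ^ 2*b₁*b₂) * x ^ 4 + (-4*a₁*a₃ ^ 3 - 8*a₂ ^ 2*a₃ ^ 2 + 4*a₂*a₃ ^ 2*b₂ +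 4*a₃ ^ 3*b₁ - 16*a₃ ^ 3*b₂ + 4*a₃ ^ 2*b₂ ^ 2) * x ^ 6 + (-4*a₂*a₃ ^ 3 - 4*a₃ ^ 4 + 4*a₃ ^ 3*b₂) * x ^ 8) / (2 * (a₁ + a₂ * x ^ 2 + a₃ * x ^ 4) * (1 + b₁ * x ^ 2 + b₂ * x ^ 4 + a₃ * x ^ 6) ^ 3))
      =ᶠ[nhdsWithin 0 (Set.Ioi 0)] (fun r : ℝ => E₃ r / r ^ 10) := by
    filter_upwards [self_mem_nhdsWithin,
      mem_nhdsWithin_of_mem_nhds (hUopen.mem_nhds hU0)] with r hrpos hrU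
    have hq_r : (1 + b₁ * r ^ 2 + b₂ * r ^ 4 + a₃ * r ^ 6) ≠ 0 := hrU.1
    have hpl_r : (a₁ + a₂ * r ^ 2 + a₃ * r ^ 4) ≠ 0 := hrU.2
    have hr0 : r ≠ 0 := ne_of_gt hrpos
    have hp_r : (a₁ * r ^ 2 + a₂ * r ^ 4 + a₃ * r ^ 6) ≠ 0 := by
      have h : (a₁ * r ^ 2 + a₂ * r ^ 4 + a₃ * r ^ 6) = r ^ 2 * (a₁ + a₂ * r ^ 2 + a₃ * r ^ 4) := by ring
      rw [h]; exact mul_ne_zero (pow_ne_zero 2 hr0) hpl_r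
    have hd1 : deriv ρ₃ r = (((2 * a₁ * r + 4 * a₂ * r ^ 3 + 6 * a₃ * r ^ 5) * (1 + b₁ * r ^ 2 + b₂ * r ^ 4 + a₃ * r ^ 6) - (a₁ * r ^ 2 + a₂ * r ^ 4 + a₃ * r ^ 6) * (2 * b₁ * r + 4 * b₂ * r ^ 3 + 6 * a₃ * r ^ 5)) / (1 + b₁ * r ^ 2 + b₂ * r ^ 4 + a₃ * r ^ 6) ^ 2) := (hder1 r hq_r).deriv
    have hd2 : deriv (deriv ρ₃) r = ((((2 * a₁ + 12 * a₂ * r ^ 2 + 30 * a₃ * r ^ 4) * (1 + b₁ * r ^ 2 + b₂ * r ^ 4 + a₃ * r ^ 6) - (a₁ * r ^ 2 + a₂ * r ^ 4 + a₃ * r ^ 6) * (2 * b₁ + 12 * b₂ * r ^ 2 + 30 * a₃ * r ^ 4)) * (1 + b₁ * r ^ 2 + b₂ * r ^ 4 + a₃ * r ^ 6) ^ 2 - ((2 * a₁ * r + 4 * a₂ * r ^ 3 + 6 * a₃ * r ^ 5) * (1 + b₁ * r ^ 2 + b₂ * r ^ 4 + a₃ * r ^ 6) - (a₁ * r ^ 2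 + a₂ * r ^ 4 + a₃ * r ^ 6) * (2 * b₁ * r + 4 * b₂ * r ^ 3 + 6 * a₃ * r ^ 5)) * (2 * (1 + b₁ * r ^ 2 + b₂ * r ^ 4 + a₃ * r ^ 6) * (2 * b₁ * r + 4 * b₂ * r ^ 3 + 6 * a₃ * r ^ 5))) / ((1 + b₁ * r ^ 2 + b₂ * r ^ 4 + a₃ * r ^ 6) ^ 2) ^ 2) := by
      have hevd : deriv ρ₃ =ᶠ[nhds r] (fun y : ℝ => (((2 * a₁ * y + 4 * a₂ * y ^ 3 + 6 * a₃ * y ^ 5) * (1 + b₁ * y ^ 2 + b₂ * y ^ 4 + a₃ * y ^ 6) - (a₁ * y ^ 2 + a₂ * y ^ 4 + a₃ * y ^ 6) * (2 * b₁ * y + 4 * b₂ * y ^ 3 + 6 * a₃ * y ^ 5)) / (1 + b₁ * y ^ 2 + b₂ * y ^ 4 + a₃ * y ^ 6) ^ 2)) := by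
        filter_upwards [hUopen.mem_nhds hrU] with x hx
        exact (hder1 x hx.1).deriv
      rw [hevd.deriv_eq]
      exact (hder2 r hq_r).deriv
    have e1 : E₃ r = (2 * r ^ 2 * (a₁ * r ^ 2 + a₂ * r ^ 4 + a₃ * r ^ 6) * (((2 * a₁ + 12 * a₂ * r ^ 2 + 30 * a₃ * r ^ 4) * (1 + b₁ * r ^ 2 + b₂ * r ^ 4 + a₃ * r ^ 6) - (a₁ * r ^ 2 + a₂ * r ^ 4 + a₃ * r ^ 6) * (2 * b₁ + 12 * b₂ * r ^ 2 + 30 * a₃ * r ^ 4)) * (1 + b₁ * r ^ 2 + b₂ * r ^ 4 + a₃ * r ^ 6) - 2 * ((2 * a₁ * r + 4 * a₂ * r ^ 3 + 6 * a₃ * r ^ 5) * (1 + b₁ * r ^ 2 + b₂ * r ^ 4 + a₃ * r ^ 6) - (a₁ * r ^ 2 + a₂ * r ^ 4 + a₃ * r ^ 6) * (2 * b₁ * r + 4 * b₂ * r ^ 3 + 6 * a₃ * r ^ 5)) * (2 * b₁ * r + 4 * b₂ * r ^ 3 + 6 * a₃ * r ^ 5)) + 2 * r * (a₁ * r ^ 2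 + a₂ * r ^ 4 + a₃ * r ^ 6) * ((2 * a₁ * r + 4 * a₂ * r ^ 3 + 6 * a₃ * r ^ 5) * (1 + b₁ * r ^ 2 + b₂ * r ^ 4 + a₃ * r ^ 6) - (a₁ * r ^ 2 + a₂ * r ^ 4 + a₃ * r ^ 6) * (2 * b₁ * r + 4 * b₂ * r ^ 3 + 6 * a₃ * r ^ 5)) * (1 + b₁ * r ^ 2 + b₂ * r ^ 4 + a₃ * r ^ 6) - r ^ 2 * ((2 * a₁ * r + 4 * a₂ * r ^ 3 + 6 * a₃ * r ^ 5) * (1 + b₁ * r ^ 2 + b₂ * r ^ 4 + a₃ * r ^ 6) - (a₁ * r ^ 2 + a₂ * r ^ 4 + a₃ * r ^ 6) * (2 * b₁ * r + 4 * b₂ * r ^ 3 + 6 * a₃ * r ^ 5)) ^ 2 - 4 * (a₁ * r ^ 2 + a₂ * r ^ 4 + a₃ * r ^ 6) ^ 2 * (1 + b₁ * r ^ 2 + b₂ * r ^ 4 + a₃ * r ^ 6) ^ 2 + 4 * r ^ 2 * (a₁ * r ^ 2 + a₂ * r ^ 4 + a₃ * r ^ 6) * ((1 + b₁ * r ^ 2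 + b₂ * r ^ 4 + a₃ * r ^ 6) - (a₁ * r ^ 2 + a₂ * r ^ 4 + a₃ * r ^ 6)) * (a₁ * r ^ 2 + a₂ * r ^ 4 + a₃ * r ^ 6) * (1 + b₁ * r ^ 2 + b₂ * r ^ 4 + a₃ * r ^ 6))
        / (2 * r ^ 2 * (a₁ * r ^ 2 + a₂ * r ^ 4 + a₃ * r ^ 6) * (1 + b₁ * r ^ 2 + b₂ * r ^ 4 + a₃ * r ^ 6) ^ 3) := by
      rw [hE₃ r, hd2, hd1, hρ₃ r]
      exact stage1 (a₁ * r ^ 2 + a₂ * r ^ 4 + a₃ * r ^ 6) (1 + b₁ * r ^ 2 + b₂ * r ^ 4 + a₃ * r ^ 6) (2 * a₁ * r + 4 * a₂ * r ^ 3 + 6 * a₃ * r ^ 5) (2 * b₁ * r + 4 * b₂ * r ^ 3 + 6 * a₃ * r ^ 5) (2 * a₁ + 12 * a₂ * r ^ 2 + 30 * a₃ * r ^ 4) (2 * b₁ + 12 * b₂ * r ^ 2 + 30 * a₃ * r ^ 4) r hr0 hq_r hp_r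
    have e2 : (2 * r ^ 2 * (a₁ * r ^ 2 + a₂ * r ^ 4 + a₃ * r ^ 6) * (((2 * a₁ + 12 * a₂ * r ^ 2 + 30 * a₃ * r ^ 4) * (1 + b₁ * r ^ 2 + b₂ * r ^ 4 + a₃ * r ^ 6) - (a₁ * r ^ 2 + a₂ * r ^ 4 + a₃ * r ^ 6) * (2 * b₁ + 12 * b₂ * r ^ 2 + 30 * a₃ * r ^ 4)) * (1 + b₁ * r ^ 2 + b₂ * r ^ 4 + a₃ * r ^ 6) - 2 * ((2 * a₁ * r + 4 * a₂ * r ^ 3 + 6 * a₃ * r ^ 5) * (1 + b₁ * r ^ 2 + b₂ * r ^ 4 + a₃ * r ^ 6) - (a₁ * r ^ 2 + a₂ * r ^ 4 + a₃ * r ^ 6) * (2 * b₁ * r + 4 * b₂ * r ^ 3 + 6 * a₃ * r ^ 5)) * (2 * b₁ * r + 4 * b₂ * r ^ 3 + 6 * a₃ * r ^ 5)) + 2 * r * (a₁ * r ^ 2 + a₂ * r ^ 4 + a₃ * r ^ 6) * ((2 * a₁ * r + 4 * a₂ * r ^ 3 + 6 * a₃ * r ^ 5) * (1 + b₁ * r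 ^ 2 + b₂ * r ^ 4 + a₃ * r ^ 6) - (a₁ * r ^ 2 + a₂ * r ^ 4 + a₃ * r ^ 6) * (2 * b₁ * r + 4 * b₂ * r ^ 3 + 6 * a₃ * r ^ 5)) * (1 + b₁ * r ^ 2 + b₂ * r ^ 4 + a₃ * r ^ 6) - r ^ 2 * ((2 * a₁ * r + 4 * a₂ * r ^ 3 + 6 * a₃ * r ^ 5) * (1 + b₁ * r ^ 2 + b₂ * r ^ 4 + a₃ * r ^ 6) - (a₁ * r ^ 2 + a₂ * r ^ 4 + a₃ * r ^ 6) * (2 * b₁ * r + 4 * b₂ * r ^ 3 + 6 * a₃ * r ^ 5)) ^ 2 - 4 * (a₁ * r ^ 2 + a₂ * r ^ 4 + a₃ * r ^ 6) ^ 2 * (1 + b₁ * r ^ 2 + b₂ * r ^ 4 + a₃ * r ^ 6) ^ 2 + 4 * r ^ 2 * (a₁ * r ^ 2 + a₂ * r ^ 4 + a₃ * r ^ 6) * ((1 + b₁ * r ^ 2 + b₂ * r ^ 4 + a₃ * r ^ 6) - (a₁ * r ^ 2 + a₂ * r ^ 4 + a₃ * r ^ 6)) * (a₁ * r ^ 2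 + a₂ * r ^ 4 + a₃ * r ^ 6) * (1 + b₁ * r ^ 2 + b₂ * r ^ 4 + a₃ * r ^ 6))
        = r ^ 16 * ((-12*a₁ ^ 2*a₂*a₃ + 12*a₁ ^ 2*a₃ ^ 2 - 4*a₁ ^ 2*a₃*b₂ - 12*a₁*a₂ ^ 2*b₂ - 8*a₁*a₂*a₃*b₁ - 8*a₁*a₂*a₃*b₂ + 8*a₁*a₂*b₂ ^ 2 - 48*a₁*a₃ ^ 2*b₁ + 4*a₁*a₃ ^ 2 + 16*a₁*a₃*b₁*b₂ + 16*a₁*a₃*b₂ ^ 2 - 4*a₂ ^ 3*b₁ - 48*a₂ ^ 2*a₃*b₁ - 4*a₂ ^ 2*a₃ + 8*a₂ ^ 2*b₁*b₂ - 4*a₂ ^ 2*b₂ ^ 2 - 168*a₂*a₃ ^ 2 + 8*a₂*a₃*b₁ ^ 2 - 8*a₂*a₃*b₁*b₂ + 16*a₂*a₃*b₂ + 12*a₃ ^ 2*b₁ ^ 2 + 8*a₃ ^ 2*b₁ - 16*a₃ ^ 2*b₂) * r ^ 0 + (-8*a₁ ^ 2*a₃ ^ 2 - 12*a₁*a₂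 ^ 2*a₃ + 16*a₁*a₂*a₃ ^ 2 - 8*a₁*a₂*a₃*b₂ + 4*a₁*a₃ ^ 2*b₁ + 16*a₁*a₃ ^ 2*b₂ + 8*a₁*a₃*b₂ ^ 2 - 4*a₂ ^ 3*b₂ - 4*a₂ ^ 2*a₃*b₁ - 16*a₂ ^ 2*a₃*b₂ + 4*a₂ ^ 2*b₂ ^ 2 - 80*a₂*a₃ ^ 2*b₁ + 4*a₂*a₃ ^ 2 + 16*a₂*a₃*b₁*b₂ - 80*a₃ ^ 3 + 4*a₃ ^ 2*b₁ ^ 2 + 8*a₃ ^ 2*b₂) * r ^ 2 + (-16*a₁*a₂*a₃ ^ 2 + 24*a₁*a₃ ^ 3 + 4*a₁*a₃ ^ 2*b₂ - 4*a₂ ^ 3*a₃ - 4*a₂ ^ 2*a₃*b₂ + 4*a₂*a₃ ^ 2*b₁ - 24*a₂*a₃ ^ 2*b₂ + 8*a₂*a₃*b₂ ^ 2 - 40*a₃ ^ 3*b₁ + 4*a₃ ^ 3 + 8*a₃ ^ 2*b₁*b₂) * r ^ 4 + (-4*a₁*a₃ ^ 3 - 8*a₂ ^ 2*a₃ ^ 2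 + 4*a₂*a₃ ^ 2*b₂ + 4*a₃ ^ 3*b₁ - 16*a₃ ^ 3*b₂ + 4*a₃ ^ 2*b₂ ^ 2) * r ^ 6 + (-4*a₂*a₃ ^ 3 - 4*a₃ ^ 4 + 4*a₃ ^ 3*b₂) * r ^ 8) := by
      linear_combination (r:ℝ) ^ 6 * hc3 + r ^ 8 * hc4 + r ^ 10 * hc5 + r ^ 12 * hc6 + r ^ 14 * hc7
    rw [e1, e2]
    rw [show (a₁ * r ^ 2 + a₂ * r ^ 4 + a₃ * r ^ 6) = r ^ 2 * (a₁ + a₂ * r ^ 2 + a₃ * r ^ 4) from by ring]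
    field_simp
  have hcont : Filter.Tendsto (fun x : ℝ => x ^ 2 * ((-12*a₁ ^ 2*a₂*a₃ + 12*a₁ ^ 2*a₃ ^ 2 - 4*a₁ ^ 2*a₃*b₂ - 12*a₁*a₂ ^ 2*b₂ - 8*a₁*a₂*a₃*b₁ - 8*a₁*a₂*a₃*b₂ + 8*a₁*a₂*b₂ ^ 2 - 48*a₁*a₃ ^ 2*b₁ + 4*a₁*a₃ ^ 2 + 16*a₁*a₃*b₁*b₂ + 16*a₁*a₃*b₂ ^ 2 - 4*a₂ ^ 3*b₁ - 48*a₂ ^ 2*a₃*b₁ - 4*a₂ ^ 2*a₃ + 8*a₂ ^ 2*b₁*b₂ - 4*a₂ ^ 2*b₂ ^ 2 - 168*a₂*a₃ ^ 2 + 8*a₂*a₃*b₁ ^ 2 - 8*a₂*a₃*b₁*b₂ + 16*a₂*a₃*b₂ + 12*a₃ ^ 2*b₁ ^ 2 + 8*a₃ ^ 2*b₁ - 16*a₃ ^ 2*b₂) * x ^ 0 + (-8*a₁ ^ 2*a₃ ^ 2 - 12*a₁*a₂ ^ 2*a₃ + 16*a₁*a₂*a₃ ^ 2 - 8*a₁*a₂*a₃*b₂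 + 4*a₁*a₃ ^ 2*b₁ + 16*a₁*a₃ ^ 2*b₂ + 8*a₁*a₃*b₂ ^ 2 - 4*a₂ ^ 3*b₂ - 4*a₂ ^ 2*a₃*b₁ - 16*a₂ ^ 2*a₃*b₂ + 4*a₂ ^ 2*b₂ ^ 2 - 80*a₂*a₃ ^ 2*b₁ + 4*a₂*a₃ ^ 2 + 16*a₂*a₃*b₁*b₂ - 80*a₃ ^ 3 + 4*a₃ ^ 2*b₁ ^ 2 + 8*a₃ ^ 2*b₂) * x ^ 2 + (-16*a₁*a₂*a₃ ^ 2 + 24*a₁*a₃ ^ 3 + 4*a₁*a₃ ^ 2*b₂ - 4*a₂ ^ 3*a₃ - 4*a₂ ^ 2*a₃*b₂ + 4*a₂*a₃ ^ 2*b₁ - 24*a₂*a₃ ^ 2*b₂ + 8*a₂*a₃*b₂ ^ 2 - 40*a₃ ^ 3*b₁ + 4*a₃ ^ 3 + 8*a₃ ^ 2*b₁*b₂) * x ^ 4 + (-4*a₁*a₃ ^ 3 - 8*a₂ ^ 2*a₃ ^ 2 + 4*a₂*a₃ ^ 2*b₂ + 4*a₃ ^ 3*b₁ - 16*a₃ ^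 3*b₂ + 4*a₃ ^ 2*b₂ ^ 2) * x ^ 6 + (-4*a₂*a₃ ^ 3 - 4*a₃ ^ 4 + 4*a₃ ^ 3*b₂) * x ^ 8) / (2 * (a₁ + a₂ * x ^ 2 + a₃ * x ^ 4) * (1 + b₁ * x ^ 2 + b₂ * x ^ 4 + a₃ * x ^ 6) ^ 3))
      (nhdsWithin 0 (Set.Ioi 0)) (nhds 0) := by
    have hc : ContinuousAt (fun x : ℝ => x ^ 2 * ((-12*a₁ ^ 2*a₂*a₃ + 12*a₁ ^ 2*a₃ ^ 2 - 4*a₁ ^ 2*a₃*b₂ - 12*a₁*a₂ ^ 2*b₂ - 8*a₁*a₂*a₃*b₁ - 8*a₁*a₂*a₃*b₂ + 8*a₁*a₂*b₂ ^ 2 - 48*a₁*a₃ ^ 2*b₁ + 4*a₁*a₃ ^ 2 + 16*a₁*a₃*b₁*b₂ + 16*a₁*a₃*b₂ ^ 2 - 4*a₂ ^ 3*b₁ - 48*a₂ ^ 2*a₃*b₁ - 4*a₂ ^ 2*a₃ + 8*a₂ ^ 2*b₁*b₂ - 4*a₂ ^ 2*b₂ ^ 2 - 168*a₂*a₃ ^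 2 + 8*a₂*a₃*b₁ ^ 2 - 8*a₂*a₃*b₁*b₂ + 16*a₂*a₃*b₂ + 12*a₃ ^ 2*b₁ ^ 2 + 8*a₃ ^ 2*b₁ - 16*a₃ ^ 2*b₂) * x ^ 0 + (-8*a₁ ^ 2*a₃ ^ 2 - 12*a₁*a₂ ^ 2*a₃ + 16*a₁*a₂*a₃ ^ 2 - 8*a₁*a₂*a₃*b₂ + 4*a₁*a₃ ^ 2*b₁ + 16*a₁*a₃ ^ 2*b₂ + 8*a₁*a₃*b₂ ^ 2 - 4*a₂ ^ 3*b₂ - 4*a₂ ^ 2*a₃*b₁ - 16*a₂ ^ 2*a₃*b₂ + 4*a₂ ^ 2*b₂ ^ 2 - 80*a₂*a₃ ^ 2*b₁ + 4*a₂*a₃ ^ 2 + 16*a₂*a₃*b₁*b₂ - 80*a₃ ^ 3 + 4*a₃ ^ 2*b₁ ^ 2 + 8*a₃ ^ 2*b₂) * x ^ 2 + (-16*a₁*a₂*a₃ ^ 2 + 24*a₁*a₃ ^ 3 + 4*a₁*a₃ ^ 2*b₂ - 4*a₂ ^ 3*a₃ - 4*a₂ ^ 2*a₃*b₂ + 4*a₂*a₃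 ^ 2*b₁ - 24*a₂*a₃ ^ 2*b₂ + 8*a₂*a₃*b₂ ^ 2 - 40*a₃ ^ 3*b₁ + 4*a₃ ^ 3 + 8*a₃ ^ 2*b₁*b₂) * x ^ 4 + (-4*a₁*a₃ ^ 3 - 8*a₂ ^ 2*a₃ ^ 2 + 4*a₂*a₃ ^ 2*b₂ + 4*a₃ ^ 3*b₁ - 16*a₃ ^ 3*b₂ + 4*a₃ ^ 2*b₂ ^ 2) * x ^ 6 + (-4*a₂*a₃ ^ 3 - 4*a₃ ^ 4 + 4*a₃ ^ 3*b₂) * x ^ 8) / (2 * (a₁ + a₂ * x ^ 2 + a₃ * x ^ 4) * (1 + b₁ * x ^ 2 + b₂ * x ^ 4 + a₃ * x ^ 6) ^ 3)) 0 := by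
      apply ContinuousAt.div
      · fun_prop
      · fun_prop
      · norm_num
        exact ne_of_gt ha₁pos
    have h0 : (fun x : ℝ => x ^ 2 * ((-12*a₁ ^ 2*a₂*a₃ + 12*a₁ ^ 2*a₃ ^ 2 - 4*a₁ ^ 2*a₃*b₂ - 12*a₁*a₂ ^ 2*b₂ - 8*a₁*a₂*a₃*b₁ - 8*a₁*a₂*a₃*b₂ + 8*a₁*a₂*b₂ ^ 2 - 48*a₁*a₃ ^ 2*b₁ + 4*a₁*a₃ ^ 2 + 16*a₁*a₃*b₁*b₂ + 16*a₁*a₃*b₂ ^ 2 - 4*a₂ ^ 3*b₁ - 48*a₂ ^ 2*a₃*b₁ - 4*a₂ ^ 2*a₃ + 8*a₂ ^ 2*b₁*b₂ - 4*a₂ ^ 2*b₂ ^ 2 - 168*a₂*a₃ ^ 2 + 8*a₂*a₃*b₁ ^ 2 - 8*a₂*a₃*b₁*b₂ + 16*a₂*a₃*b₂ + 12*a₃ ^ 2*b₁ ^ 2 + 8*a₃ ^ 2*b₁ - 16*a₃ ^ 2*b₂) * x ^ 0 + (-8*a₁ ^ 2*a₃ ^ 2 - 12*a₁*a₂ ^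 2*a₃ + 16*a₁*a₂*a₃ ^ 2 - 8*a₁*a₂*a₃*b₂ + 4*a₁*a₃ ^ 2*b₁ + 16*a₁*a₃ ^ 2*b₂ + 8*a₁*a₃*b₂ ^ 2 - 4*a₂ ^ 3*b₂ - 4*a₂ ^ 2*a₃*b₁ - 16*a₂ ^ 2*a₃*b₂ + 4*a₂ ^ 2*b₂ ^ 2 - 80*a₂*a₃ ^ 2*b₁ + 4*a₂*a₃ ^ 2 + 16*a₂*a₃*b₁*b₂ - 80*a₃ ^ 3 + 4*a₃ ^ 2*b₁ ^ 2 + 8*a₃ ^ 2*b₂) * x ^ 2 + (-16*a₁*a₂*a₃ ^ 2 + 24*a₁*a₃ ^ 3 + 4*a₁*a₃ ^ 2*b₂ - 4*a₂ ^ 3*a₃ - 4*a₂ ^ 2*a₃*b₂ + 4*a₂*a₃ ^ 2*b₁ - 24*a₂*a₃ ^ 2*b₂ + 8*a₂*a₃*b₂ ^ 2 - 40*a₃ ^ 3*b₁ + 4*a₃ ^ 3 + 8*a₃ ^ 2*b₁*b₂) * x ^ 4 + (-4*a₁*a₃ ^ 3 - 8*a₂ ^ 2*a₃ ^ 2 +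 4*a₂*a₃ ^ 2*b₂ + 4*a₃ ^ 3*b₁ - 16*a₃ ^ 3*b₂ + 4*a₃ ^ 2*b₂ ^ 2) * x ^ 6 + (-4*a₂*a₃ ^ 3 - 4*a₃ ^ 4 + 4*a₃ ^ 3*b₂) * x ^ 8) / (2 * (a₁ + a₂ * x ^ 2 + a₃ * x ^ 4) * (1 + b₁ * x ^ 2 + b₂ * x ^ 4 + a₃ * x ^ 6) ^ 3)) 0 = 0 := by norm_num
    have h : Filter.Tendsto (fun x : ℝ => x ^ 2 * ((-12*a₁ ^ 2*a₂*a₃ + 12*a₁ ^ 2*a₃ ^ 2 - 4*a₁ ^ 2*a₃*b₂ - 12*a₁*a₂ ^ 2*b₂ - 8*a₁*a₂*a₃*b₁ - 8*a₁*a₂*a₃*b₂ + 8*a₁*a₂*b₂ ^ 2 - 48*a₁*a₃ ^ 2*b₁ + 4*a₁*a₃ ^ 2 + 16*a₁*a₃*b₁*b₂ + 16*a₁*a₃*b₂ ^ 2 - 4*a₂ ^ 3*b₁ - 48*a₂ ^ 2*a₃*b₁ - 4*a₂ ^ 2*a₃ + 8*a₂ ^ 2*b₁*b₂ - 4*a₂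 ^ 2*b₂ ^ 2 - 168*a₂*a₃ ^ 2 + 8*a₂*a₃*b₁ ^ 2 - 8*a₂*a₃*b₁*b₂ + 16*a₂*a₃*b₂ + 12*a₃ ^ 2*b₁ ^ 2 + 8*a₃ ^ 2*b₁ - 16*a₃ ^ 2*b₂) * x ^ 0 + (-8*a₁ ^ 2*a₃ ^ 2 - 12*a₁*a₂ ^ 2*a₃ + 16*a₁*a₂*a₃ ^ 2 - 8*a₁*a₂*a₃*b₂ + 4*a₁*a₃ ^ 2*b₁ + 16*a₁*a₃ ^ 2*b₂ + 8*a₁*a₃*b₂ ^ 2 - 4*a₂ ^ 3*b₂ - 4*a₂ ^ 2*a₃*b₁ - 16*a₂ ^ 2*a₃*b₂ + 4*a₂ ^ 2*b₂ ^ 2 - 80*a₂*a₃ ^ 2*b₁ + 4*a₂*a₃ ^ 2 + 16*a₂*a₃*b₁*b₂ - 80*a₃ ^ 3 + 4*a₃ ^ 2*b₁ ^ 2 + 8*a₃ ^ 2*b₂) * x ^ 2 + (-16*a₁*a₂*a₃ ^ 2 + 24*a₁*a₃ ^ 3 + 4*a₁*a₃ ^ 2*b₂ - 4*a₂ ^ 3*a₃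 - 4*a₂ ^ 2*a₃*b₂ + 4*a₂*a₃ ^ 2*b₁ - 24*a₂*a₃ ^ 2*b₂ + 8*a₂*a₃*b₂ ^ 2 - 40*a₃ ^ 3*b₁ + 4*a₃ ^ 3 + 8*a₃ ^ 2*b₁*b₂) * x ^ 4 + (-4*a₁*a₃ ^ 3 - 8*a₂ ^ 2*a₃ ^ 2 + 4*a₂*a₃ ^ 2*b₂ + 4*a₃ ^ 3*b₁ - 16*a₃ ^ 3*b₂ + 4*a₃ ^ 2*b₂ ^ 2) * x ^ 6 + (-4*a₂*a₃ ^ 3 - 4*a₃ ^ 4 + 4*a₃ ^ 3*b₂) * x ^ 8) / (2 * (a₁ + a₂ * x ^ 2 + a₃ * x ^ 4) * (1 + b₁ * x ^ 2 + b₂ * x ^ 4 + a₃ * x ^ 6) ^ 3)) (nhds 0) (nhds ((fun x : ℝ => x ^ 2 * ((-12*a₁ ^ 2*a₂*a₃ + 12*a₁ ^ 2*a₃ ^ 2 - 4*a₁ ^ 2*a₃*b₂ - 12*a₁*a₂ ^ 2*b₂ - 8*a₁*a₂*a₃*b₁ - 8*a₁*a₂*a₃*b₂ + 8*a₁*a₂*b₂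 ^ 2 - 48*a₁*a₃ ^ 2*b₁ + 4*a₁*a₃ ^ 2 + 16*a₁*a₃*b₁*b₂ + 16*a₁*a₃*b₂ ^ 2 - 4*a₂ ^ 3*b₁ - 48*a₂ ^ 2*a₃*b₁ - 4*a₂ ^ 2*a₃ + 8*a₂ ^ 2*b₁*b₂ - 4*a₂ ^ 2*b₂ ^ 2 - 168*a₂*a₃ ^ 2 + 8*a₂*a₃*b₁ ^ 2 - 8*a₂*a₃*b₁*b₂ + 16*a₂*a₃*b₂ + 12*a₃ ^ 2*b₁ ^ 2 + 8*a₃ ^ 2*b₁ - 16*a₃ ^ 2*b₂) * x ^ 0 + (-8*a₁ ^ 2*a₃ ^ 2 - 12*a₁*a₂ ^ 2*a₃ + 16*a₁*a₂*a₃ ^ 2 - 8*a₁*a₂*a₃*b₂ + 4*a₁*a₃ ^ 2*b₁ + 16*a₁*a₃ ^ 2*b₂ + 8*a₁*a₃*b₂ ^ 2 - 4*a₂ ^ 3*b₂ - 4*a₂ ^ 2*a₃*b₁ - 16*a₂ ^ 2*a₃*b₂ + 4*a₂ ^ 2*b₂ ^ 2 - 80*a₂*a₃ ^ 2*b₁ +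 4*a₂*a₃ ^ 2 + 16*a₂*a₃*b₁*b₂ - 80*a₃ ^ 3 + 4*a₃ ^ 2*b₁ ^ 2 + 8*a₃ ^ 2*b₂) * x ^ 2 + (-16*a₁*a₂*a₃ ^ 2 + 24*a₁*a₃ ^ 3 + 4*a₁*a₃ ^ 2*b₂ - 4*a₂ ^ 3*a₃ - 4*a₂ ^ 2*a₃*b₂ + 4*a₂*a₃ ^ 2*b₁ - 24*a₂*a₃ ^ 2*b₂ + 8*a₂*a₃*b₂ ^ 2 - 40*a₃ ^ 3*b₁ + 4*a₃ ^ 3 + 8*a₃ ^ 2*b₁*b₂) * x ^ 4 + (-4*a₁*a₃ ^ 3 - 8*a₂ ^ 2*a₃ ^ 2 + 4*a₂*a₃ ^ 2*b₂ + 4*a₃ ^ 3*b₁ - 16*a₃ ^ 3*b₂ + 4*a₃ ^ 2*b₂ ^ 2) * x ^ 6 + (-4*a₂*a₃ ^ 3 - 4*a₃ ^ 4 + 4*a₃ ^ 3*b₂) * x ^ 8) / (2 * (a₁ + a₂ * x ^ 2 + a₃ * x ^ 4) * (1 + b₁ * x ^ 2 + b₂ * x ^ 4 + a₃ * x ^ 6)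 ^ 3)) 0)) := hc.tendsto
    rw [h0] at h
    exact h.mono_left nhdsWithin_le_nhds
  exact Filter.Tendsto.congr' hev hcont
end

section
/- Let m ≥ 3 and let h₁,…,h_{m−1} be strictly positive real numbers. Define the m×m real tridiagonal matrix A₁ by: (A₁)_{1,1} = −2/h₁², (A₁)_{1,2} = 2/h₁²; for 2 ≤ i ≤ m−1, (A₁)_{i,i−1} = 2/(h_{i−1}(h_{i−1}+h_i)), (A₁)_{i,i} = −2/(h_{i−1}h_i), (A₁)_{i,i+1} = 2/(h_i(h_{i−1}+h_i)); (A₁)_{m,m−1} = 2/h_{m−1}², (A₁)_{m,m} = −2/h_{m−1}²; and all other entries zero. Let W₁ be the diagonal matrix with diagonal entries (h₁, h₁+h₂, h₂+h₃, …, h_{m−2}+h_{m−1}, h_{m−1}). Then the matrix W₁A₁ is symmetric. -/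
open Matrix
set_option maxHeartbeats 2000000 in

/-- The nonuniform finite difference Laplacian `A₁` (with homogeneous Neumann boundary
conditions, grid steps `h₁,…,h_{m−1} > 0`) is symmetrized by the diagonal matrix `W₁` of
trapezoidal weights `(h₁, h₁+h₂, …, h_{m−2}+h_{m−1}, h_{m−1})`: the matrix `W₁A₁` is
symmetric. Rows are indexed by `i : Fin m`, with `i.val = 0` corresponding to the first
row and `i.val = m−1` to the last row of the statement. -/
theorem stmt_16 (m : ℕ) (hm : 3 ≤ m) (h : ℕ → ℝ)
    (hpos : ∀ i : ℕ, 1 ≤ i → i ≤ m - 1 → 0 < h i) :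
    let A₁ : Matrix (Fin m) (Fin m) ℝ := Matrix.of fun i j : Fin m =>
      if i.val = 0 then
        if j.val = 0 then -2 / (h 1) ^ 2 else if j.val = 1 then 2 / (h 1) ^ 2 else 0
      else if i.val = m - 1 then
        if j.val = m - 2 then 2 / (h (m - 1)) ^ 2
        else if j.val = m - 1 then -2 / (h (m - 1)) ^ 2 else 0
      else
        if j.val = i.val - 1 then 2 / (h i.val * (h i.val + h (i.val + 1)))
        else if j.val = i.val then -2 / (h i.val * h (i.val + 1))
        else if j.val = i.val + 1 then 2 / (h (i.val + 1) * (h i.val + h (i.val + 1)))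
        else 0
    let W₁ : Matrix (Fin m) (Fin m) ℝ := Matrix.diagonal fun i : Fin m =>
      if i.val = 0 then h 1
      else if i.val = m - 1 then h (m - 1)
      else h i.val + h (i.val + 1)
    (W₁ * A₁).IsSymm := by
  intro A₁ W₁
  have hne : ∀ k, 1 ≤ k → k ≤ m - 1 → h k ≠ 0 := fun k h1 h2 => ne_of_gt (hpos k h1 h2)
  rw [Matrix.IsSymm]
  ext ⟨a, ha⟩ ⟨b, hb⟩
  simp only [A₁, W₁, Matrix.transpose_apply, Matrix.diagonal_mul, Matrix.of_apply]
  split_ifs <;> try omega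
  all_goals try ring1
  all_goals (
    try (have e : a = 0 := (by omega); subst e)
    try (have e : b = 0 := (by omega); subst e)
    try (have e : b = a := (by omega); subst e)
    try (have e : a = b + 1 := (by omega); subst e)
    try (have e : b = a + 1 := (by omega); subst e)
    try (have e : a = 1 := (by omega); subst e)
    try (have e : b = 1 := (by omega); subst e)
    try (have e : a = m - 2 := (by omega); subst e)
    try (have e : b = m - 2 := (by omega); subst e)
    try rw [show m - 2 + 1 = m - 1 from by omega]
    try have p1 : (0:ℝ) < h 1 := hpos 1 (by omega) (by omega)
    try have p2 : (0:ℝ) < h 2 := hpos 2 (by omega) (by omega)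
    try have p3 : (0:ℝ) < h (m-1) := hpos (m-1) (by omega) (by omega)
    try have p4 : (0:ℝ) < h (m-2) := hpos (m-2) (by omega) (by omega)
    try have p5 : (0:ℝ) < h a := hpos a (by omega) (by omega)
    try have p6 : (0:ℝ) < h (a+1) := hpos (a+1) (by omega) (by omega)
    try have p7 : (0:ℝ) < h (a+2) := hpos (a+2) (by omega) (by omega)
    try have p8 : (0:ℝ) < h b := hpos b (by omega) (by omega)
    try have p9 : (0:ℝ) < h (b+1) := hpos (b+1) (by omega) (by omega)
    try have p10 : (0:ℝ) < h (b+2) := hpos (b+2) (by omega) (by omega)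
    try have q1 : h 1 ≠ 0 := by positivity
    try have q2 : h 2 ≠ 0 := by positivity
    try have q3 : h (m-1) ≠ 0 := by positivity
    try have q4 : h (m-2) ≠ 0 := by positivity
    try have q5 : h a ≠ 0 := by positivity
    try have q6 : h (a+1) ≠ 0 := by positivity
    try have q7 : h (a+2) ≠ 0 := by positivity
    try have q8 : h b ≠ 0 := by positivity
    try have q9 : h (b+1) ≠ 0 := by positivity
    try have q10 : h (b+2) ≠ 0 := by positivity
    try have s1 : h 1 + h 2 ≠ 0 := by positivity
    try have s2 : h (m-2) + h (m-1) ≠ 0 := by positivity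
    try have s3 : h a + h (a+1) ≠ 0 := by positivity
    try have s4 : h (a+1) + h (a+2) ≠ 0 := by positivity
    try have s5 : h b + h (b+1) ≠ 0 := by positivity
    try have s6 : h (b+1) + h (b+2) ≠ 0 := by positivity
    first | ring1 | (field_simp; try ring1) | rfl)
end
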